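/- (Iterated simulation.) Let M be a PTIME TM with tape alphabet Γ and input alphabet Σ, together with an encoding as in the simulation setup. Then there exists a term SIMULATE of ForNo such that: for every state σ, configuration c, halting configuration c_HALT and natural number p with σ ≈ c and c ⇝ᵖ c_HALT, and for every k ≥ p, the k-fold sequential composition SIMULATE;…;SIMULATE satisfies ⟨SIMULATE;…;SIMULATE, σ⟩ ⇓ τ for some τ with τ ≈ c_HALT. -/

import Mathlib

set_option linter.unusedVariables false

namespace ForNo

/-- Registers. -/
abbrev Reg := ℕ
/-- Stacks of natural numbers; the head is the top. -/
abbrev Stack := List ℕ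
/-- Stores map registers to stacks. -/
abbrev Store := Reg → Stack
/-- A state is a store together with an error counter. -/
abbrev FState := Store × ℕ

/-- The store mapping every register to the empty stack. -/
def emptyStore : Store := fun _ => []

/-- Store update. -/
def upd (φ : Store) (x : Reg) (s : Stack) : Store := fun y => if y = x then s else φ y

/-- Counter-guarded push operation. -/
def pushOp (n : ℕ) : Stack × ℕ → Stack × ℕ
  | (s, 0) => (n :: s, 0)
  | (s, c + 1) => if s.head? = some n then (s, c + 1) else (s, c)

/-- Counter-guarded pop operation. -/
def popOp (n : ℕ) : Stack × ℕ → Stack × ℕ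
  | (s, c) =>
      if s.head? = some n then
        match c with
        | 0 => (s.tail, 0)
        | c + 1 => (s, c + 1)
      else (s, c + 1)

mutual
  /-- Terms of the (raw) language. -/
  inductive Term : Type where
    | skip : Term
    | push : ℕ → Reg → Term
    | pop : ℕ → Reg → Term
    | seq : Term → Term → Term
    | ifeq : Reg → ℕ → Term → Term
    | normal : List Reg → Term → Term
    | fort : Reg → Bodies → Term
    | roft : Reg → Bodies → Term
  /-- Nonempty lists of iteration bodies. -/
  inductive Bodies : Type where
    | single : Term → Bodies
    | cons : Term → Bodies → Bodies
end

/-- `ps.get i` is `P_min(i,m)` where `ps = P₀ … P_m`. -/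
def Bodies.get : Bodies → ℕ → Term
  | .single t, _ => t
  | .cons t _, 0 => t
  | .cons _ ps, i + 1 => ps.get i

mutual
  /-- Big-step operational semantics `⟨T, ω⟩ ⇓ ω'`. -/
  inductive Eval : Term → FState → FState → Prop where
    | skip : ∀ ω, Eval .skip ω ω
    | seq : ∀ {t u : Term} {ω ω' ω'' : FState},
        Eval t ω ω' → Eval u ω' ω'' → Eval (.seq t u) ω ω''
    | push : ∀ (n : ℕ) (x : Reg) (φ : Store) (c : ℕ),
        Eval (.push n x) (φ, c) (upd φ x (pushOp n (φ x, c)).1, (pushOp n (φ x, c)).2)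
    | pop : ∀ (n : ℕ) (x : Reg) (φ : Store) (c : ℕ),
        Eval (.pop n x) (φ, c) (upd φ x (popOp n (φ x, c)).1, (popOp n (φ x, c)).2)
    | ifeq_true : ∀ {x n t} {φ : Store} {c : ℕ} {ω' : FState},
        (φ x).head? = some n → Eval t (φ, c) ω' → Eval (.ifeq x n t) (φ, c) ω'
    | ifeq_false : ∀ {x n t} (φ : Store) (c : ℕ),
        (φ x).head? ≠ some n → Eval (.ifeq x n t) (φ, c) (φ, c)
    | normal : ∀ {xs t ω ω'}, Eval t ω ω' → Eval (.normal xs t) ω ω'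
    | fort : ∀ {x ps ω ω'}, EvalList (ω.1 x) ps ω ω' → Eval (.fort x ps) ω ω'
    | roft : ∀ {x ps ω ω'}, EvalList (ω.1 x).reverse ps ω ω' → Eval (.roft x ps) ω ω'
  /-- Iteration judgment `⟦s, ps, ω⟧ ⇓ ω'`. -/
  inductive EvalList : Stack → Bodies → FState → FState → Prop where
    | nil : ∀ (ps : Bodies) (ω : FState), EvalList [] ps ω ω
    | cons : ∀ {i : ℕ} {t : Stack} {ps : Bodies} {ω ω'' ω' : FState},
        Eval (ps.get i) ω ω'' → EvalList t ps ω'' ω' → EvalList (i :: t) ps ω ω'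
end

mutual
  /-- The inversion map `−(·)` on terms. -/
  def Term.inv : Term → Term
    | .skip => .skip
    | .push n x => .pop n x
    | .pop n x => .push n x
    | .seq t u => .seq u.inv t.inv
    | .ifeq x n t => .ifeq x n t.inv
    | .normal xs t => .normal xs t.inv
    | .fort x ps => .roft x ps.inv
    | .roft x ps => .fort x ps.inv
  def Bodies.inv : Bodies → Bodies
    | .single t => .single t.inv
    | .cons t ps => .cons t.inv ps.inv
end

mutual
  /-- `t.Writes y` holds iff some `PUSH`/`POP` occurring in `t` writes register `y`. -/
  def Term.Writes : Term → Reg → Prop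
    | .skip, _ => False
    | .push _ x, y => x = y
    | .pop _ x, y => x = y
    | .seq t u, y => t.Writes y ∨ u.Writes y
    | .ifeq _ _ t, y => t.Writes y
    | .normal _ t, y => t.Writes y
    | .fort _ ps, y => ps.Writes y
    | .roft _ ps, y => ps.Writes y
  def Bodies.Writes : Bodies → Reg → Prop
    | .single t, y => t.Writes y
    | .cons t ps, y => t.Writes y ∨ ps.Writes y
end

mutual
  /-- `t.Leads y` holds iff `y` leads some `FOR`/`ROF` iteration occurring in `t`. -/
  def Term.Leads : Term → Reg → Prop
    | .skip, _ => False
    | .push _ _, _ => False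
    | .pop _ _, _ => False
    | .seq t u, y => t.Leads y ∨ u.Leads y
    | .ifeq _ _ t, y => t.Leads y
    | .normal _ t, y => t.Leads y
    | .fort x ps, y => x = y ∨ ps.Leads y
    | .roft x ps, y => x = y ∨ ps.Leads y
  def Bodies.Leads : Bodies → Reg → Prop
    | .single t, y => t.Leads y
    | .cons t ps, y => t.Leads y ∨ ps.Leads y
end

mutual
  /-- `t.Mentions y` holds iff register `y` occurs in `t`. -/
  def Term.Mentions : Term → Reg → Prop
    | .skip, _ => False
    | .push _ x, y => x = y
    | .pop _ x, y => x = y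
    | .seq t u, y => t.Mentions y ∨ u.Mentions y
    | .ifeq x _ t, y => x = y ∨ t.Mentions y
    | .normal xs t, y => y ∈ xs ∨ t.Mentions y
    | .fort x ps, y => x = y ∨ ps.Mentions y
    | .roft x ps, y => x = y ∨ ps.Mentions y
  def Bodies.Mentions : Bodies → Reg → Prop
    | .single t, y => t.Mentions y
    | .cons t ps, y => t.Mentions y ∨ ps.Mentions y
end

mutual
  /-- The finite set of registers occurring in a term. -/
  def Term.regs : Term → Finset Reg
    | .skip => ∅
    | .push _ x => {x}
    | .pop _ x => {x}
    | .seq t u => t.regs ∪ u.regs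
    | .ifeq x _ t => insert x t.regs
    | .normal xs t => xs.toFinset ∪ t.regs
    | .fort x ps => insert x ps.regs
    | .roft x ps => insert x ps.regs
  def Bodies.regs : Bodies → Finset Reg
    | .single t => t.regs
    | .cons t ps => t.regs ∪ ps.regs
end

mutual
  /-- Safe terms: generated by the grammar `S` (no `NORMAL`). -/
  def Term.Safe : Term → Prop
    | .skip => True
    | .push _ _ => True
    | .pop _ _ => True
    | .seq t u => t.Safe ∧ u.Safe
    | .ifeq _ _ t => t.Safe
    | .normal _ _ => False
    | .fort _ ps => ps.Safe
    | .roft _ ps => ps.Safe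
  def Bodies.Safe : Bodies → Prop
    | .single t => t.Safe
    | .cons t ps => t.Safe ∧ ps.Safe
end

/-- Raw terms: generated by the grammar `T` (iterations only inside `NORMAL` bodies,
which must be safe). -/
def Term.Raw : Term → Prop
  | .skip => True
  | .push _ _ => True
  | .pop _ _ => True
  | .seq t u => t.Raw ∧ u.Raw
  | .ifeq _ _ t => t.Raw
  | .normal _ t => t.Safe
  | .fort _ _ => False
  | .roft _ _ => False

mutual
  /-- The read-only constraints (i) and (ii) defining membership in ForNo. -/
  def Term.WF : Term → Prop
    | .skip => True
    | .push _ _ => True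
    | .pop _ _ => True
    | .seq t u => t.WF ∧ u.WF
    | .ifeq x _ t => t.WF ∧ ¬ t.Writes x
    | .normal xs t => t.WF ∧ (∀ x ∈ xs, ¬ t.Writes x) ∧ (∀ y, t.Leads y → y ∈ xs)
    | .fort x ps => ps.WF ∧ ¬ ps.Writes x
    | .roft x ps => ps.WF ∧ ¬ ps.Writes x
  def Bodies.WF : Bodies → Prop
    | .single t => t.WF
    | .cons t ps => t.WF ∧ ps.WF
end

/-- A raw term is in ForNo if it satisfies the read-only constraints. -/
def InForNo (t : Term) : Prop := t.Raw ∧ t.WF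

/-- `iterSeq t k` is the `k`-fold sequential composition `t;…;t` (`SKIP` for `k = 0`). -/
def iterSeq (t : Term) : ℕ → Term
  | 0 => .skip
  | 1 => t
  | n + 2 => .seq t (iterSeq t (n + 1))

/-- `mkBodiesAux g i k` is the list of bodies `g i, g (i+1), …, g (i+k)`. -/
def mkBodiesAux (g : ℕ → Term) : ℕ → ℕ → Bodies
  | i, 0 => .single (g i)
  | i, k + 1 => .cons (g i) (mkBodiesAux g (i + 1) k)

/-- `mkBodies g k` is the list of bodies `g 0, g 1, …, g k`. -/
def mkBodies (g : ℕ → Term) (k : ℕ) : Bodies := mkBodiesAux g 0 k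

/-- `COPY(x,y)` with bodies `PUSH[0] y, …, PUSH[k] y`. -/
def COPY (x y : Reg) (k : ℕ) : Term :=
  .normal [x] (.roft x (mkBodies (fun i => .push i y) k))

/-- `n` nested `FOR rgt` iterations around `PUSH[1] p`. -/
def powNest (rgt p : Reg) : ℕ → Term
  | 0 => .push 1 p
  | n + 1 => .fort rgt (.single (powNest rgt p n))

/-- The term `POW^n`. -/
def POW (rgt p : Reg) (n : ℕ) : Term := .normal [rgt] (powNest rgt p n)

/-- The term `REMOVE-BLANKS` for tape alphabet codes `{0,…,n−1}` and
input alphabet codes `{0,…,m−1}`. -/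
def REMOVEBLANKS (rgt g1 : Reg) (n m : ℕ) : Term :=
  .seq (.normal [rgt] (.roft rgt (mkBodies (fun i => .push i g1) (n - 1))))
       (.normal [g1]
         (.seq (.fort g1 (mkBodies (fun i => .pop i rgt) (n - 1)))
               (.roft g1 (mkBodies (fun i => if i < m then .push i rgt else .skip) m))))

mutual
  /-- Big-step semantics instrumented with the number of rule applications
  in the derivation. -/
  inductive EvalN : ℕ → Term → FState → FState → Prop where
    | skip : ∀ ω, EvalN 1 .skip ω ω
    | seq : ∀ {k l : ℕ} {t u : Term} {ω ω' ω'' : FState},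
        EvalN k t ω ω' → EvalN l u ω' ω'' → EvalN (k + l + 1) (.seq t u) ω ω''
    | push : ∀ (n : ℕ) (x : Reg) (φ : Store) (c : ℕ),
        EvalN 1 (.push n x) (φ, c) (upd φ x (pushOp n (φ x, c)).1, (pushOp n (φ x, c)).2)
    | pop : ∀ (n : ℕ) (x : Reg) (φ : Store) (c : ℕ),
        EvalN 1 (.pop n x) (φ, c) (upd φ x (popOp n (φ x, c)).1, (popOp n (φ x, c)).2)
    | ifeq_true : ∀ {k x n t} {φ : Store} {c : ℕ} {ω' : FState},
        (φ x).head? = some n → EvalN k t (φ, c) ω' → EvalN (k + 1) (.ifeq x n t) (φ, c) ω'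
    | ifeq_false : ∀ {x n t} (φ : Store) (c : ℕ),
        (φ x).head? ≠ some n → EvalN 1 (.ifeq x n t) (φ, c) (φ, c)
    | normal : ∀ {k xs t ω ω'}, EvalN k t ω ω' → EvalN (k + 1) (.normal xs t) ω ω'
    | fort : ∀ {k x ps ω ω'}, EvalListN k (ω.1 x) ps ω ω' → EvalN (k + 1) (.fort x ps) ω ω'
    | roft : ∀ {k x ps ω ω'}, EvalListN k (ω.1 x).reverse ps ω ω' → EvalN (k + 1) (.roft x ps) ω ω'
  inductive EvalListN : ℕ → Stack → Bodies → FState → FState → Prop where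
    | nil : ∀ (ps : Bodies) (ω : FState), EvalListN 1 [] ps ω ω
    | cons : ∀ {k l : ℕ} {i : ℕ} {t : Stack} {ps : Bodies} {ω ω'' ω' : FState},
        EvalN k (ps.get i) ω ω'' → EvalListN l t ps ω'' ω' →
        EvalListN (k + l + 1) (i :: t) ps ω ω'
end

/-! ### Turing machines -/

/-- Deterministic one-tape Turing machines with a semi-infinite tape, input/output
alphabet `S` embedded in the tape alphabet `Γ`, and direction `Bool`
(`false` = left, `true` = right). -/
structure TM (S : Type) where
  Q : Type
  finQ : Fintype Q
  q0 : Q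
  qhalt : Q
  Γ : Type
  finΓ : Fintype Γ
  decΓ : DecidableEq Γ
  blank : Γ
  embed : S → Γ
  embed_inj : Function.Injective embed
  blank_notin : ∀ a, embed a ≠ blank
  δ : Q → Γ → Q × Γ × Bool

namespace TM

variable {S : Type}

/-- Configurations `(u, q, v)`: left tape part (nearest cell first), current state,
right tape part starting with the scanned cell (no trailing blanks). -/
abbrev Config (M : TM S) : Type := List M.Γ × M.Q × List M.Γ

/-- Remove the trailing blanks of a list. -/
def trim (M : TM S) (l : List M.Γ) : List M.Γ :=
  letI := M.decΓ
  (l.reverse.dropWhile (fun a => decide (a = M.blank))).reverse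

/-- The single-step transition function. -/
def stepFn (M : TM S) (c : M.Config) : M.Config :=
  let u := c.1
  let q := c.2.1
  let v := c.2.2
  let a := v.headD M.blank
  let r := M.δ q a
  if r.2.2 then (r.2.1 :: u, r.1, v.tail)
  else (u.tail, r.1, M.trim (u.headD M.blank :: r.2.1 :: v.tail))

/-- Single-step transition relation `c ⇝ c'`. -/
def Step (M : TM S) (c c' : M.Config) : Prop := c.2.1 ≠ M.qhalt ∧ c' = M.stepFn c

/-- `n`-step transition relation `c ⇝ⁿ c'`. -/
def Steps (M : TM S) : ℕ → M.Config → M.Config → Prop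
  | 0 => fun c c' => c = c'
  | n + 1 => fun c c'' => ∃ c', M.Step c c' ∧ M.Steps n c' c''

/-- The initial configuration on input `w`. -/
def init (M : TM S) (w : List S) : M.Config := ([], M.q0, w.map M.embed)

/-- `M` is a polynomial-time Turing machine. -/
def PTime (M : TM S) : Prop :=
  ∃ a b : ℕ, 0 < a ∧ 0 < b ∧ ∀ w : List S,
    ∃ k ≤ a * w.length ^ b, ∃ c : M.Config, M.Steps k (M.init w) c ∧ c.2.1 = M.qhalt

end TM

/-- `f` is computable in polynomial time. -/
def FPTime {S : Type} (f : List S → List S) : Prop :=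
  ∃ M : TM S, M.PTime ∧
    ∀ w : List S, ∃ k : ℕ, M.Steps k (M.init w) ([], M.qhalt, (f w).map M.embed)

/-- `f` is honest: the input length is polynomially bounded in the output length. -/
def Honest {S : Type} (f : List S → List S) : Prop :=
  ∃ q : Polynomial ℕ, ∀ x : List S, x.length ≤ q.eval (f x).length

/-! ### Encodings and computed functions -/

/-- An encoding of a finite alphabet `S`: a bijection onto `{0, …, |S| − 1}`. -/
structure Encoding (S : Type) [Fintype S] where
  enc : S → ℕ
  inj : Function.Injective enc
  lt : ∀ a, enc a < Fintype.card S

/-- Encoding of strings as stacks. -/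
def Encoding.encStr {S : Type} [Fintype S] (e : Encoding S) (w : List S) : Stack :=
  w.map e.enc

/-- `T` (with input register `rin` and output register `rout`) computes `f`. -/
def Computes {S : Type} [Fintype S] (e : Encoding S) (T : Term) (rin rout : Reg)
    (f : List S → List S) : Prop :=
  ∀ x : List S, ∃ φ : Store,
    Eval T (upd emptyStore rin (e.encStr x), 0) (φ, 0) ∧ φ rout = e.encStr (f x)

/-- `T` computes `f` with zero-garbage. -/
def ComputesZG {S : Type} [Fintype S] (e : Encoding S) (T : Term) (rin rout : Reg)
    (f : List S → List S) : Prop :=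
  ∀ x : List S, ∃ φ : Store,
    Eval T (upd emptyStore rin (e.encStr x), 0) (φ, 0) ∧ φ rout = e.encStr (f x) ∧
    ∀ y : Reg, y ≠ rout → φ y = []

/-! ### Simulation of Turing machines -/

/-- The register holding the left part of the tape. -/
def lftR : Reg := 0
/-- The register holding the current state. -/
def qR : Reg := 1
/-- The register holding the right part of the tape. -/
def rgtR : Reg := 2

/-- `σ` simulates configuration `c` (written `σ ≈ c`). -/
def Sim {S : Type} (M : TM S) (encΓ : M.Γ → ℕ) (encQ : M.Q → ℕ)
    (σ : FState) (c : M.Config) : Prop :=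
  σ.2 = 0 ∧
  σ.1 lftR = c.1.map encΓ ∧
  (σ.1 qR).head? = some (encQ c.2.1) ∧
  ∃ bs : Stack, (∀ b ∈ bs, b = encΓ M.blank) ∧ σ.1 rgtR = c.2.2.map encΓ ++ bs

/-- `σ` cleanly simulates configuration `c` (written `σ ≅ c`). -/
def SimClean {S : Type} (M : TM S) (encΓ : M.Γ → ℕ) (encQ : M.Q → ℕ)
    (σ : FState) (c : M.Config) : Prop :=
  σ.2 = 0 ∧
  σ.1 lftR = c.1.map encΓ ∧
  (σ.1 qR).head? = some (encQ c.2.1) ∧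
  σ.1 rgtR = c.2.2.map encΓ

/-- The hypotheses of the simulation setup: `encΓ` is a bijection of `Γ` onto
`{0,…,n−1}` giving non-input characters larger codes than input characters,
and `encQ` is an injective encoding of states. -/
def SimSetup {S : Type} (M : TM S) (encΓ : M.Γ → ℕ) (encQ : M.Q → ℕ) : Prop :=
  Function.Injective encΓ ∧
  (∀ a : M.Γ, encΓ a < @Fintype.card M.Γ M.finΓ) ∧
  (∀ a : M.Γ, (∀ s : S, M.embed s ≠ a) → ∀ s : S, encΓ (M.embed s) < encΓ a) ∧
  Function.Injective encQ

end ForNo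

namespace ForNoAux
open ForNo

/-! ### Generic machinery -/

def seqList : List Term → Term
  | [] => .skip
  | t :: l => .seq t (seqList l)

lemma eval_seqList_append {l₁ l₂ : List Term} {ω ω' ω'' : FState}
    (h1 : Eval (seqList l₁) ω ω') (h2 : Eval (seqList l₂) ω' ω'') :
    Eval (seqList (l₁ ++ l₂)) ω ω'' := by
  induction l₁ generalizing ω with
  | nil => cases h1; exact h2
  | cons t l ih =>
    cases h1 with
    | seq ha hb => exact .seq ha (ih hb)

lemma eval_seqList_id {l : List Term} {ω : FState} (h : ∀ t ∈ l, Eval t ω ω) :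
    Eval (seqList l) ω ω := by
  induction l with
  | nil => exact .skip ω
  | cons t l ih =>
    exact .seq (h t (List.mem_cons_self)) (ih (fun u hu => h u (List.mem_cons_of_mem _ hu)))

lemma eval_seqList_one {ι : Type} {f : ι → Term} {L : List ι} {i₀ : ι} {ω ω' : FState}
    (hnd : L.Nodup) (hmem : i₀ ∈ L) (hfire : Eval (f i₀) ω ω')
    (hother : ∀ i ∈ L, i ≠ i₀ → Eval (f i) ω ω ∧ Eval (f i) ω' ω') :
    Eval (seqList (L.map f)) ω ω' := by
  induction L with
  | nil => cases hmem
  | cons j L ih =>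
    have hnd' := List.nodup_cons.mp hnd
    rcases List.mem_cons.mp hmem with rfl | hmem'
    · refine .seq hfire (eval_seqList_id fun t ht => ?_)
      obtain ⟨i, hi, rfl⟩ := List.mem_map.mp ht
      exact (hother i (List.mem_cons_of_mem _ hi) (fun h => hnd'.1 (h ▸ hi))).2
    · have hj : j ≠ i₀ := fun h => hnd'.1 (h ▸ hmem')
      exact .seq (hother j (List.mem_cons_self) hj).1
        (ih hnd'.2 hmem' (fun i hi hne => hother i (List.mem_cons_of_mem _ hi) hne))

lemma eval_seqList_map_id {ι : Type} {f : ι → Term} {L : List ι} {ω : FState}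
    (h : ∀ i ∈ L, Eval (f i) ω ω) : Eval (seqList (L.map f)) ω ω := by
  refine eval_seqList_id fun t ht => ?_
  obtain ⟨i, hi, rfl⟩ := List.mem_map.mp ht
  exact h i hi

lemma eval_push0 (n : ℕ) (x : Reg) (φ : Store) :
    Eval (.push n x) (φ, 0) (upd φ x (n :: φ x), 0) := by
  have := Eval.push n x φ 0
  simpa [pushOp] using this

lemma eval_pop0 {φ : Store} {x : Reg} {n : ℕ} {s : Stack} (h : φ x = n :: s) :
    Eval (.pop n x) (φ, 0) (upd φ x s, 0) := by
  have := Eval.pop n x φ 0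
  simpa [popOp, h] using this

lemma eval_if_neg {φ : Store} {c : ℕ} {x : Reg} {n : ℕ} {t : Term}
    (h : (φ x).head? ≠ some n) : Eval (.ifeq x n t) (φ, c) (φ, c) :=
  .ifeq_false φ c h

lemma eval_if_if_neg {φ : Store} {c : ℕ} {x y : Reg} {n m : ℕ} {t : Term}
    (h1 : (φ x).head? = some n) (h2 : (φ y).head? ≠ some m) :
    Eval (.ifeq x n (.ifeq y m t)) (φ, c) (φ, c) :=
  .ifeq_true h1 (.ifeq_false φ c h2)

lemma seqList_raw {l : List Term} (h : ∀ t ∈ l, t.Raw) : (seqList l).Raw := by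
  induction l with
  | nil => trivial
  | cons t l ih =>
    exact ⟨h t (List.mem_cons_self), ih (fun u hu => h u (List.mem_cons_of_mem _ hu))⟩

lemma seqList_wf {l : List Term} (h : ∀ t ∈ l, t.WF) : (seqList l).WF := by
  induction l with
  | nil => trivial
  | cons t l ih =>
    exact ⟨h t (List.mem_cons_self), ih (fun u hu => h u (List.mem_cons_of_mem _ hu))⟩

lemma nat_digit_inj {B p r p' r' : ℕ} (hr : r < B) (hr' : r' < B)
    (h : p * B + r = p' * B + r') : p = p' ∧ r = r' := by
  have hB : 0 < B := lt_of_le_of_lt (Nat.zero_le _) hr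
  have h' : r + B * p = r' + B * p' := by rw [mul_comm B p, mul_comm B p']; omega
  have e1 : (r + B * p) / B = p := by
    rw [Nat.add_mul_div_left _ _ hB, Nat.div_eq_of_lt hr]; omega
  have e2 : (r' + B * p') / B = p' := by
    rw [Nat.add_mul_div_left _ _ hB, Nat.div_eq_of_lt hr']; omega
  have hp : p = p' := by rw [← e1, ← e2, h']
  subst hp
  exact ⟨rfl, by omega⟩

/-! ### The simulator -/

noncomputable section
open scoped Classical

variable {S : Type} (M : TM S) (encΓ : M.Γ → ℕ) (encQ : M.Q → ℕ)

def SrR : Reg := 3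
def TrR : Reg := 4
def UrR : Reg := 5

def NB : ℕ := @Fintype.card M.Γ M.finΓ

def cRead (q : M.Q) (a : M.Γ) : ℕ := 2 + encQ q * NB M + encΓ a
def cG (q : M.Q) (a g : M.Γ) : ℕ := 2 + cRead M encΓ encQ q a * NB M + encΓ g

def IsLeft (q : M.Q) (a : M.Γ) : Prop := q ≠ M.qhalt ∧ (M.δ q a).2.2 = false
def nQ (q : M.Q) (a : M.Γ) : M.Q := (M.δ q a).1
def nA (q : M.Q) (a : M.Γ) : M.Γ := (M.δ q a).2.1

def br2 (g : M.Γ) : Term := .ifeq rgtR (encΓ g) (.push 1 TrR)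
def br3 : Term := .ifeq TrR 0 (.push (encΓ M.blank) rgtR)
def br4 (p : M.Q × M.Γ) : Term :=
  if p.1 = M.qhalt then .skip else
    .ifeq qR (encQ p.1) (.ifeq rgtR (encΓ p.2) (.push (cRead M encΓ encQ p.1 p.2) TrR))
def br5 (p : M.Q × M.Γ) : Term :=
  if p.1 ≠ M.qhalt ∧ (M.δ p.1 p.2).2.2 = true then
    .ifeq TrR (cRead M encΓ encQ p.1 p.2)
      (.seq (.pop (encΓ p.2) rgtR)
        (.seq (.push (encΓ (nA M p.1 p.2)) lftR) (.push (encQ (nQ M p.1 p.2)) qR)))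
  else .skip
def br6 (p : M.Q × M.Γ) : Term :=
  if IsLeft M p.1 p.2 then
    .ifeq TrR (cRead M encΓ encQ p.1 p.2)
      (.seq (.pop (encΓ p.2) rgtR) (.push (encΓ (nA M p.1 p.2)) rgtR))
  else .skip
def br8 (pg : (M.Q × M.Γ) × M.Γ) : Term :=
  if IsLeft M pg.1.1 pg.1.2 then
    .ifeq TrR (cRead M encΓ encQ pg.1.1 pg.1.2)
      (.ifeq lftR (encΓ pg.2) (.push (cG M encΓ encQ pg.1.1 pg.1.2 pg.2) UrR))
  else .skip
def br9 (p : M.Q × M.Γ) : Term :=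
  if IsLeft M p.1 p.2 then
    .ifeq UrR 0 (.ifeq TrR (cRead M encΓ encQ p.1 p.2) (.push (cRead M encΓ encQ p.1 p.2) SrR))
  else .skip
def br10 (pg : (M.Q × M.Γ) × M.Γ) : Term :=
  if IsLeft M pg.1.1 pg.1.2 then
    .ifeq UrR (cG M encΓ encQ pg.1.1 pg.1.2 pg.2)
      (.seq (.pop (encΓ pg.2) lftR)
        (.seq (.push (encΓ pg.2) rgtR) (.push (encQ (nQ M pg.1.1 pg.1.2)) qR)))
  else .skip
def br11 (p : M.Q × M.Γ) : Term :=
  if IsLeft M p.1 p.2 then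
    .ifeq SrR (cRead M encΓ encQ p.1 p.2)
      (.seq (.push (encΓ M.blank) rgtR) (.push (encQ (nQ M p.1 p.2)) qR))
  else .skip

def LG : List M.Γ := letI := M.finΓ; Finset.univ.toList
def LQG : List (M.Q × M.Γ) := letI := M.finQ; letI := M.finΓ; Finset.univ.toList
def LQGG : List ((M.Q × M.Γ) × M.Γ) := letI := M.finQ; letI := M.finΓ; Finset.univ.toList

lemma LG_nodup : (LG M).Nodup := Finset.nodup_toList _
lemma LQG_nodup : (LQG M).Nodup := Finset.nodup_toList _
lemma LQGG_nodup : (LQGG M).Nodup := Finset.nodup_toList _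
lemma mem_LG (g : M.Γ) : g ∈ LG M :=
  Finset.mem_toList.mpr (@Finset.mem_univ _ M.finΓ g)
lemma mem_LQG (p : M.Q × M.Γ) : p ∈ LQG M := by
  unfold LQG
  letI := M.finQ; letI := M.finΓ
  exact Finset.mem_toList.mpr (Finset.mem_univ _)
lemma mem_LQGG (p : (M.Q × M.Γ) × M.Γ) : p ∈ LQGG M := by
  unfold LQGG
  letI := M.finQ; letI := M.finΓ
  exact Finset.mem_toList.mpr (Finset.mem_univ _)

def SIMUL : Term :=
  seqList ([Term.push 0 TrR] ++ (LG M).map (br2 M encΓ) ++ [br3 M encΓ]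
    ++ (LQG M).map (br4 M encΓ encQ) ++ (LQG M).map (br5 M encΓ encQ)
    ++ (LQG M).map (br6 M encΓ encQ) ++ [Term.push 0 UrR, Term.push 0 SrR]
    ++ (LQGG M).map (br8 M encΓ encQ) ++ (LQG M).map (br9 M encΓ encQ)
    ++ (LQGG M).map (br10 M encΓ encQ) ++ (LQG M).map (br11 M encΓ encQ))

/-! ### Code facts -/

variable {M encΓ encQ}

lemma cRead_inj (hQ : Function.Injective encQ) (hG : Function.Injective encΓ)
    (hlt : ∀ a : M.Γ, encΓ a < NB M) {q q' : M.Q} {a a' : M.Γ}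
    (h : cRead M encΓ encQ q a = cRead M encΓ encQ q' a') : q = q' ∧ a = a' := by
  unfold cRead at h
  obtain ⟨h1, h2⟩ := nat_digit_inj (p := encQ q) (p' := encQ q') (hlt a) (hlt a') (by omega)
  exact ⟨hQ h1, hG h2⟩

lemma cRead_ge2 (q : M.Q) (a : M.Γ) : 2 ≤ cRead M encΓ encQ q a := by
  unfold cRead; omega

lemma cG_inj (hQ : Function.Injective encQ) (hG : Function.Injective encΓ)
    (hlt : ∀ a : M.Γ, encΓ a < NB M) {q q' : M.Q} {a a' g g' : M.Γ}
    (h : cG M encΓ encQ q a g = cG M encΓ encQ q' a' g') : q = q' ∧ a = a' ∧ g = g' := by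
  unfold cG at h
  obtain ⟨h1, h2⟩ := nat_digit_inj (p := cRead M encΓ encQ q a)
    (p' := cRead M encΓ encQ q' a') (hlt g) (hlt g') (by omega)
  obtain ⟨hq, ha⟩ := cRead_inj hQ hG hlt h1
  exact ⟨hq, ha, hG h2⟩

lemma cG_ge2 (q : M.Q) (a g : M.Γ) : 2 ≤ cG M encΓ encQ q a g := by
  unfold cG; omega

/-! ### SIMUL is in ForNo -/

lemma SIMUL_inForNo : InForNo (SIMUL M encΓ encQ) := by
  constructor
  · apply seqList_raw
    intro t ht
    simp only [SIMUL, List.mem_append, List.mem_map, List.mem_cons, List.mem_singleton,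
      List.not_mem_nil, or_false] at ht
    rcases ht with ((((((((((h) | ⟨V,_,h⟩) | h) | ⟨p,_,h⟩) | ⟨p,_,h⟩) | ⟨p,_,h⟩) | (h | h)) | ⟨p,_,h⟩) | ⟨p,_,h⟩) | ⟨p,_,h⟩) | ⟨p,_,h⟩
    all_goals subst h
    all_goals first
      | trivial
      | (simp only [br2, br3, br4, br5, br6, br8, br9, br10, br11]
         first
           | (split_ifs <;> simp [Term.Raw, Term.Safe])
           | simp [Term.Raw, Term.Safe])
  · apply seqList_wf
    intro t ht
    simp only [SIMUL, List.mem_append, List.mem_map, List.mem_cons, List.mem_singleton,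
      List.not_mem_nil, or_false] at ht
    rcases ht with ((((((((((h) | ⟨V,_,h⟩) | h) | ⟨p,_,h⟩) | ⟨p,_,h⟩) | ⟨p,_,h⟩) | (h | h)) | ⟨p,_,h⟩) | ⟨p,_,h⟩) | ⟨p,_,h⟩) | ⟨p,_,h⟩
    all_goals subst h
    all_goals first
      | trivial
      | (simp only [br2, br3, br4, br5, br6, br8, br9, br10, br11]
         first
           | (split_ifs <;> simp [Term.WF, Term.Writes, lftR, qR, rgtR, SrR, TrR, UrR])
           | simp [Term.WF, Term.Writes, lftR, qR, rgtR, SrR, TrR, UrR])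

end

/-! ### Trim representation -/

lemma trim_rep {S : Type} (M : TM S) (l : List M.Γ) :
    ∃ k, M.trim l ++ List.replicate k M.blank = l := by
  letI := M.decΓ
  unfold TM.trim
  refine ⟨(l.reverse.takeWhile (fun a => decide (a = M.blank))).length, ?_⟩
  have h1 : (l.reverse.takeWhile (fun a => decide (a = M.blank))) =
      List.replicate (l.reverse.takeWhile (fun a => decide (a = M.blank))).length M.blank := by
    apply List.eq_replicate_length.mpr
    intro b hb
    have := List.mem_takeWhile_imp hb
    simpa using this
  conv_rhs => rw [← l.reverse_reverse, ← List.takeWhile_append_dropWhile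
    (p := fun a => decide (a = M.blank)) (l := l.reverse)]
  rw [List.reverse_append]
  congr 1
  conv_rhs => rw [h1, List.reverse_replicate]

lemma map_trim_rep {S : Type} {M : TM S} {encΓ : M.Γ → ℕ} {bs2 : Stack}
    (hbs2 : ∀ x ∈ bs2, x = encΓ M.blank) (l : List M.Γ) :
    ∃ bs3 : Stack, (∀ x ∈ bs3, x = encΓ M.blank) ∧
      l.map encΓ ++ bs2 = (M.trim l).map encΓ ++ bs3 := by
  obtain ⟨k, hk⟩ := trim_rep M l
  refine ⟨(List.replicate k M.blank).map encΓ ++ bs2, ?_, ?_⟩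
  · intro x hx
    rcases List.mem_append.mp hx with hx | hx
    · obtain ⟨a, ha, rfl⟩ := List.mem_map.mp hx
      rw [List.eq_of_mem_replicate ha]
    · exact hbs2 x hx
  · rw [← List.append_assoc, ← List.map_append, hk]

/-! ### Phase lemmas -/

section Phases

variable {S : Type} {M : TM S} {encΓ : M.Γ → ℕ} {encQ : M.Q → ℕ}
variable (hG : Function.Injective encΓ) (hQinj : Function.Injective encQ)
variable (hlt : ∀ a : M.Γ, encΓ a < NB M)

include hG hQinj hlt

lemma phase2_fire {φ : Store} {g₀ : M.Γ}
    (hr : (φ rgtR).head? = some (encΓ g₀)) :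
    Eval (seqList ((LG M).map (br2 M encΓ))) (φ, 0) (upd φ TrR (1 :: φ TrR), 0) := by
  refine eval_seqList_one (LG_nodup M) (mem_LG M g₀) ?_ ?_
  · show Eval (br2 M encΓ g₀) _ _
    simp only [br2]
    exact .ifeq_true hr (eval_push0 1 TrR φ)
  · intro g _ hne
    have hneq : (φ rgtR).head? ≠ some (encΓ g) := by
      rw [hr]; intro hc; exact hne (hG (Option.some.inj hc).symm)
    exact ⟨eval_if_neg hneq, eval_if_neg hneq⟩

lemma phase2_empty {φ : Store} (hr : φ rgtR = []) :
    Eval (seqList ((LG M).map (br2 M encΓ))) (φ, 0) (φ, 0) := by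
  refine eval_seqList_map_id fun g _ => ?_
  have hneq : (φ rgtR).head? ≠ some (encΓ g) := by rw [hr]; simp
  exact eval_if_neg hneq

lemma phase4_fire {φ : Store} {p₀ : M.Q × M.Γ}
    (hq : (φ qR).head? = some (encQ p₀.1)) (h0 : p₀.1 ≠ M.qhalt)
    (hr : (φ rgtR).head? = some (encΓ p₀.2)) :
    Eval (seqList ((LQG M).map (br4 M encΓ encQ))) (φ, 0)
      (upd φ TrR (cRead M encΓ encQ p₀.1 p₀.2 :: φ TrR), 0) := by
  refine eval_seqList_one (LQG_nodup M) (mem_LQG M p₀) ?_ ?_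
  · simp only [br4, if_neg h0]
    exact .ifeq_true hq (.ifeq_true hr (eval_push0 _ TrR φ))
  · intro p _ hne
    by_cases hph : p.1 = M.qhalt
    · simp only [br4, if_pos hph]
      exact ⟨.skip _, .skip _⟩
    · simp only [br4, if_neg hph]
      by_cases hp1 : p.1 = p₀.1
      · have hp2 : p.2 ≠ p₀.2 := fun h => hne (Prod.ext_iff.mpr ⟨hp1, h⟩)
        have hneq : (φ rgtR).head? ≠ some (encΓ p.2) := by
          rw [hr]; intro hc; exact hp2 (hG (Option.some.inj hc).symm)
        have hqq : (φ qR).head? = some (encQ p.1) := by rw [hq, hp1]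
        exact ⟨eval_if_if_neg hqq hneq, eval_if_if_neg hqq hneq⟩
      · have hneq : (φ qR).head? ≠ some (encQ p.1) := by
          rw [hq]; intro hc; exact hp1 (hQinj (Option.some.inj hc).symm)
        exact ⟨eval_if_neg hneq, eval_if_neg hneq⟩

lemma phase4_halt {φ : Store} {q₀ : M.Q}
    (hq : (φ qR).head? = some (encQ q₀)) (h0 : q₀ = M.qhalt) :
    Eval (seqList ((LQG M).map (br4 M encΓ encQ))) (φ, 0) (φ, 0) := by
  refine eval_seqList_map_id fun p _ => ?_
  by_cases hph : p.1 = M.qhalt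
  · simp only [br4, if_pos hph]; exact .skip _
  · simp only [br4, if_neg hph]
    have hneq : (φ qR).head? ≠ some (encQ p.1) := by
      rw [hq]; intro hc; exact hph (h0 ▸ hQinj (Option.some.inj hc).symm)
    exact eval_if_neg hneq

lemma phase5_fire {φ : Store} {p₀ : M.Q × M.Γ} {r' : Stack}
    (ht : (φ TrR).head? = some (cRead M encΓ encQ p₀.1 p₀.2))
    (h0 : p₀.1 ≠ M.qhalt) (hd : (M.δ p₀.1 p₀.2).2.2 = true)
    (hr : φ rgtR = encΓ p₀.2 :: r') :
    Eval (seqList ((LQG M).map (br5 M encΓ encQ))) (φ, 0)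
      (upd (upd (upd φ rgtR r') lftR (encΓ (nA M p₀.1 p₀.2) :: φ lftR)) qR
        (encQ (nQ M p₀.1 p₀.2) :: φ qR), 0) := by
  refine eval_seqList_one (LQG_nodup M) (mem_LQG M p₀) ?_ ?_
  · simp only [br5, if_pos (And.intro h0 hd)]
    exact .ifeq_true ht (.seq (eval_pop0 hr)
      (.seq (eval_push0 _ lftR _) (eval_push0 _ qR _)))
  · intro p _ hne
    by_cases hc : p.1 ≠ M.qhalt ∧ (M.δ p.1 p.2).2.2 = true
    · simp only [br5, if_pos hc]
      have hneq : (φ TrR).head? ≠ some (cRead M encΓ encQ p.1 p.2) := by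
        rw [ht]; intro h
        obtain ⟨h1, h2⟩ := cRead_inj hQinj hG hlt (Option.some.inj h)
        exact hne (Prod.ext_iff.mpr ⟨h1.symm, h2.symm⟩)
      exact ⟨eval_if_neg hneq, eval_if_neg hneq⟩
    · simp only [br5, if_neg hc]
      exact ⟨.skip _, .skip _⟩

lemma phase5_id {φ : Store} {k : ℕ}
    (ht : (φ TrR).head? = some k)
    (hk : ∀ q a, q ≠ M.qhalt → (M.δ q a).2.2 = true → k ≠ cRead M encΓ encQ q a) :
    Eval (seqList ((LQG M).map (br5 M encΓ encQ))) (φ, 0) (φ, 0) := by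
  refine eval_seqList_map_id fun p _ => ?_
  by_cases hc : p.1 ≠ M.qhalt ∧ (M.δ p.1 p.2).2.2 = true
  · simp only [br5, if_pos hc]
    have hneq : (φ TrR).head? ≠ some (cRead M encΓ encQ p.1 p.2) := by
      rw [ht]; intro h
      exact hk p.1 p.2 hc.1 hc.2 (Option.some.inj h)
    exact eval_if_neg hneq
  · simp only [br5, if_neg hc]; exact .skip _

lemma phase6_fire {φ : Store} {p₀ : M.Q × M.Γ} {r' : Stack}
    (ht : (φ TrR).head? = some (cRead M encΓ encQ p₀.1 p₀.2))
    (hL : IsLeft M p₀.1 p₀.2)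
    (hr : φ rgtR = encΓ p₀.2 :: r') :
    Eval (seqList ((LQG M).map (br6 M encΓ encQ))) (φ, 0)
      (upd (upd φ rgtR r') rgtR (encΓ (nA M p₀.1 p₀.2) :: r'), 0) := by
  refine eval_seqList_one (LQG_nodup M) (mem_LQG M p₀) ?_ ?_
  · simp only [br6, if_pos hL]
    exact .ifeq_true ht (.seq (eval_pop0 hr) (eval_push0 _ rgtR _))
  · intro p _ hne
    by_cases hc : IsLeft M p.1 p.2
    · simp only [br6, if_pos hc]
      have hneq : (φ TrR).head? ≠ some (cRead M encΓ encQ p.1 p.2) := by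
        rw [ht]; intro h
        obtain ⟨h1, h2⟩ := cRead_inj hQinj hG hlt (Option.some.inj h)
        exact hne (Prod.ext_iff.mpr ⟨h1.symm, h2.symm⟩)
      exact ⟨eval_if_neg hneq, eval_if_neg hneq⟩
    · simp only [br6, if_neg hc]
      exact ⟨.skip _, .skip _⟩

lemma phase6_id {φ : Store} {k : ℕ}
    (ht : (φ TrR).head? = some k)
    (hk : ∀ q a, IsLeft M q a → k ≠ cRead M encΓ encQ q a) :
    Eval (seqList ((LQG M).map (br6 M encΓ encQ))) (φ, 0) (φ, 0) := by
  refine eval_seqList_map_id fun p _ => ?_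
  by_cases hc : IsLeft M p.1 p.2
  · simp only [br6, if_pos hc]
    have hneq : (φ TrR).head? ≠ some (cRead M encΓ encQ p.1 p.2) := by
      rw [ht]; intro h
      exact hk p.1 p.2 hc (Option.some.inj h)
    exact eval_if_neg hneq
  · simp only [br6, if_neg hc]; exact .skip _

lemma phase8_fire {φ : Store} {p₀ : M.Q × M.Γ} {g₀ : M.Γ}
    (ht : (φ TrR).head? = some (cRead M encΓ encQ p₀.1 p₀.2))
    (hL : IsLeft M p₀.1 p₀.2)
    (hl : (φ lftR).head? = some (encΓ g₀)) :
    Eval (seqList ((LQGG M).map (br8 M encΓ encQ))) (φ, 0)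
      (upd φ UrR (cG M encΓ encQ p₀.1 p₀.2 g₀ :: φ UrR), 0) := by
  refine eval_seqList_one (LQGG_nodup M) (mem_LQGG M (p₀, g₀)) ?_ ?_
  · simp only [br8, if_pos hL]
    exact .ifeq_true ht (.ifeq_true hl (eval_push0 _ UrR φ))
  · intro pg _ hne
    by_cases hc : IsLeft M pg.1.1 pg.1.2
    · simp only [br8, if_pos hc]
      by_cases hp : pg.1 = p₀
      · have hg : pg.2 ≠ g₀ := fun h => hne (Prod.ext_iff.mpr ⟨hp, h⟩)
        have htt : (φ TrR).head? = some (cRead M encΓ encQ pg.1.1 pg.1.2) := by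
          rw [ht, hp]
        have hneq : (φ lftR).head? ≠ some (encΓ pg.2) := by
          rw [hl]; intro h; exact hg (hG (Option.some.inj h).symm)
        exact ⟨eval_if_if_neg htt hneq, eval_if_if_neg htt hneq⟩
      · have hneq : (φ TrR).head? ≠ some (cRead M encΓ encQ pg.1.1 pg.1.2) := by
          rw [ht]; intro h
          obtain ⟨h1, h2⟩ := cRead_inj hQinj hG hlt (Option.some.inj h)
          exact hp (Prod.ext_iff.mpr ⟨h1.symm, h2.symm⟩)
        exact ⟨eval_if_neg hneq, eval_if_neg hneq⟩
    · simp only [br8, if_neg hc]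
      exact ⟨.skip _, .skip _⟩

lemma phase8_id_noleft {φ : Store} {k : ℕ}
    (ht : (φ TrR).head? = some k)
    (hk : ∀ q a, IsLeft M q a → k ≠ cRead M encΓ encQ q a) :
    Eval (seqList ((LQGG M).map (br8 M encΓ encQ))) (φ, 0) (φ, 0) := by
  refine eval_seqList_map_id fun pg _ => ?_
  by_cases hc : IsLeft M pg.1.1 pg.1.2
  · simp only [br8, if_pos hc]
    have hneq : (φ TrR).head? ≠ some (cRead M encΓ encQ pg.1.1 pg.1.2) := by
      rw [ht]; intro h
      exact hk pg.1.1 pg.1.2 hc (Option.some.inj h)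
    exact eval_if_neg hneq
  · simp only [br8, if_neg hc]; exact .skip _

lemma phase8_id_lempty {φ : Store}
    (hl : φ lftR = []) :
    Eval (seqList ((LQGG M).map (br8 M encΓ encQ))) (φ, 0) (φ, 0) := by
  refine eval_seqList_map_id fun pg _ => ?_
  by_cases hc : IsLeft M pg.1.1 pg.1.2
  · simp only [br8, if_pos hc]
    by_cases htt : (φ TrR).head? = some (cRead M encΓ encQ pg.1.1 pg.1.2)
    · refine eval_if_if_neg htt ?_
      rw [hl]; simp
    · exact eval_if_neg htt
  · simp only [br8, if_neg hc]; exact .skip _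

lemma phase9_fire {φ : Store} {p₀ : M.Q × M.Γ}
    (hu : (φ UrR).head? = some 0)
    (ht : (φ TrR).head? = some (cRead M encΓ encQ p₀.1 p₀.2))
    (hL : IsLeft M p₀.1 p₀.2) :
    Eval (seqList ((LQG M).map (br9 M encΓ encQ))) (φ, 0)
      (upd φ SrR (cRead M encΓ encQ p₀.1 p₀.2 :: φ SrR), 0) := by
  refine eval_seqList_one (LQG_nodup M) (mem_LQG M p₀) ?_ ?_
  · simp only [br9, if_pos hL]
    exact .ifeq_true hu (.ifeq_true ht (eval_push0 _ SrR φ))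
  · intro p _ hne
    by_cases hc : IsLeft M p.1 p.2
    · simp only [br9, if_pos hc]
      have hneq : (φ TrR).head? ≠ some (cRead M encΓ encQ p.1 p.2) := by
        rw [ht]; intro h
        obtain ⟨h1, h2⟩ := cRead_inj hQinj hG hlt (Option.some.inj h)
        exact hne (Prod.ext_iff.mpr ⟨h1.symm, h2.symm⟩)
      exact ⟨eval_if_if_neg hu hneq, eval_if_if_neg hu hneq⟩
    · simp only [br9, if_neg hc]
      exact ⟨.skip _, .skip _⟩

lemma phase9_id_u {φ : Store} {u0 : ℕ}
    (hu : (φ UrR).head? = some u0) (hu0 : u0 ≠ 0) :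
    Eval (seqList ((LQG M).map (br9 M encΓ encQ))) (φ, 0) (φ, 0) := by
  refine eval_seqList_map_id fun p _ => ?_
  by_cases hc : IsLeft M p.1 p.2
  · simp only [br9, if_pos hc]
    refine eval_if_neg ?_
    rw [hu]; intro h; exact hu0 (Option.some.inj h)
  · simp only [br9, if_neg hc]; exact .skip _

lemma phase9_id_t {φ : Store} {k : ℕ}
    (hu : (φ UrR).head? = some 0)
    (ht : (φ TrR).head? = some k)
    (hk : ∀ q a, IsLeft M q a → k ≠ cRead M encΓ encQ q a) :
    Eval (seqList ((LQG M).map (br9 M encΓ encQ))) (φ, 0) (φ, 0) := by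
  refine eval_seqList_map_id fun p _ => ?_
  by_cases hc : IsLeft M p.1 p.2
  · simp only [br9, if_pos hc]
    refine eval_if_if_neg hu ?_
    rw [ht]; intro h
    exact hk p.1 p.2 hc (Option.some.inj h)
  · simp only [br9, if_neg hc]; exact .skip _

lemma phase10_fire {φ : Store} {p₀ : M.Q × M.Γ} {g₀ : M.Γ} {l' : Stack}
    (hu : (φ UrR).head? = some (cG M encΓ encQ p₀.1 p₀.2 g₀))
    (hL : IsLeft M p₀.1 p₀.2)
    (hl : φ lftR = encΓ g₀ :: l') :
    Eval (seqList ((LQGG M).map (br10 M encΓ encQ))) (φ, 0)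
      (upd (upd (upd φ lftR l') rgtR (encΓ g₀ :: φ rgtR)) qR
        (encQ (nQ M p₀.1 p₀.2) :: φ qR), 0) := by
  refine eval_seqList_one (LQGG_nodup M) (mem_LQGG M (p₀, g₀)) ?_ ?_
  · simp only [br10, if_pos hL]
    exact .ifeq_true hu (.seq (eval_pop0 hl)
      (.seq (eval_push0 _ rgtR _) (eval_push0 _ qR _)))
  · intro pg _ hne
    by_cases hc : IsLeft M pg.1.1 pg.1.2
    · simp only [br10, if_pos hc]
      have hneq : (φ UrR).head? ≠ some (cG M encΓ encQ pg.1.1 pg.1.2 pg.2) := by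
        rw [hu]; intro h
        obtain ⟨h1, h2, h3⟩ := cG_inj hQinj hG hlt (Option.some.inj h)
        exact hne (Prod.ext_iff.mpr ⟨Prod.ext_iff.mpr ⟨h1.symm, h2.symm⟩, h3.symm⟩)
      exact ⟨eval_if_neg hneq, eval_if_neg hneq⟩
    · simp only [br10, if_neg hc]
      exact ⟨.skip _, .skip _⟩

lemma phase10_id {φ : Store} {u0 : ℕ}
    (hu : (φ UrR).head? = some u0)
    (hu0 : ∀ q a g, IsLeft M q a → u0 ≠ cG M encΓ encQ q a g) :
    Eval (seqList ((LQGG M).map (br10 M encΓ encQ))) (φ, 0) (φ, 0) := by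
  refine eval_seqList_map_id fun pg _ => ?_
  by_cases hc : IsLeft M pg.1.1 pg.1.2
  · simp only [br10, if_pos hc]
    refine eval_if_neg ?_
    rw [hu]; intro h
    exact hu0 pg.1.1 pg.1.2 pg.2 hc (Option.some.inj h)
  · simp only [br10, if_neg hc]; exact .skip _

lemma phase11_fire {φ : Store} {p₀ : M.Q × M.Γ}
    (hs : (φ SrR).head? = some (cRead M encΓ encQ p₀.1 p₀.2))
    (hL : IsLeft M p₀.1 p₀.2) :
    Eval (seqList ((LQG M).map (br11 M encΓ encQ))) (φ, 0)
      (upd (upd φ rgtR (encΓ M.blank :: φ rgtR)) qR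
        (encQ (nQ M p₀.1 p₀.2) :: φ qR), 0) := by
  refine eval_seqList_one (LQG_nodup M) (mem_LQG M p₀) ?_ ?_
  · simp only [br11, if_pos hL]
    exact .ifeq_true hs (.seq (eval_push0 _ rgtR _) (eval_push0 _ qR _))
  · intro p _ hne
    by_cases hc : IsLeft M p.1 p.2
    · simp only [br11, if_pos hc]
      have hneq : (φ SrR).head? ≠ some (cRead M encΓ encQ p.1 p.2) := by
        rw [hs]; intro h
        obtain ⟨h1, h2⟩ := cRead_inj hQinj hG hlt (Option.some.inj h)
        exact hne (Prod.ext_iff.mpr ⟨h1.symm, h2.symm⟩)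
      exact ⟨eval_if_neg hneq, eval_if_neg hneq⟩
    · simp only [br11, if_neg hc]
      exact ⟨.skip _, .skip _⟩

lemma phase11_id {φ : Store} {s0 : ℕ}
    (hs : (φ SrR).head? = some s0)
    (hs0 : ∀ q a, IsLeft M q a → s0 ≠ cRead M encΓ encQ q a) :
    Eval (seqList ((LQG M).map (br11 M encΓ encQ))) (φ, 0) (φ, 0) := by
  refine eval_seqList_map_id fun p _ => ?_
  by_cases hc : IsLeft M p.1 p.2
  · simp only [br11, if_pos hc]
    refine eval_if_neg ?_
    rw [hs]; intro h
    exact hs0 p.1 p.2 hc (Option.some.inj h)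
  · simp only [br11, if_neg hc]; exact .skip _

lemma step_eval {φ : Store} {c : M.Config}
    (hsim : Sim M encΓ encQ (φ, 0) c) :
    ∃ ψ : Store, Eval (SIMUL M encΓ encQ) (φ, 0) (ψ, 0) ∧
      ((c.2.1 = M.qhalt ∧ Sim M encΓ encQ (ψ, 0) c) ∨
       (c.2.1 ≠ M.qhalt ∧ Sim M encΓ encQ (ψ, 0) (M.stepFn c))) := by
  obtain ⟨u, q₀, v⟩ := c
  obtain ⟨-, hL, hQ, bs, hbs, hR⟩ := hsim
  simp only at hL hQ hR
  -- Stage A : phases 1–3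
  have keyA : ∃ (ψ : Store) (bs' : Stack) (t0 : ℕ),
      Eval (seqList ([Term.push 0 TrR] ++ (LG M).map (br2 M encΓ) ++ [br3 M encΓ]))
        (φ, 0) (ψ, 0) ∧
      ψ lftR = φ lftR ∧ ψ qR = φ qR ∧
      ψ rgtR = v.map encΓ ++ bs' ∧ (∀ x ∈ bs', x = encΓ M.blank) ∧
      (ψ rgtR).head? = some (encΓ (v.headD M.blank)) ∧
      (ψ TrR).head? = some t0 ∧ t0 < 2 := by
    set φ1 := upd φ TrR (0 :: φ TrR) with hφ1
    have ev1 : Eval (seqList [Term.push 0 TrR]) (φ, 0) (φ1, 0) :=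
      .seq (eval_push0 _ _ _) (.skip _)
    by_cases he : φ rgtR = []
    · have hv : v = [] := by
        rw [he] at hR
        simpa using (List.append_eq_nil_iff.mp hR.symm).1
      subst hv
      have hbsnil : bs = [] := by
        rw [he] at hR
        simpa using hR.symm
      set φ2 := upd φ1 rgtR (encΓ M.blank :: φ1 rgtR) with hφ2
      have ev2 : Eval (seqList ((LG M).map (br2 M encΓ))) (φ1, 0) (φ1, 0) :=
        phase2_empty hG hQinj hlt (show φ1 rgtR = [] from he)
      have ev3 : Eval (seqList [br3 M encΓ]) (φ1, 0) (φ2, 0) := by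
        refine .seq ?_ (.skip _)
        simp only [br3]
        exact .ifeq_true rfl (eval_push0 _ _ _)
      refine ⟨φ2, [encΓ M.blank], 0,
        eval_seqList_append (eval_seqList_append ev1 ev2) ev3,
        rfl, rfl, ?_, ?_, rfl, rfl, by omega⟩
      · show encΓ M.blank :: φ1 rgtR = List.map encΓ [] ++ [encΓ M.blank]
        show encΓ M.blank :: φ rgtR = _
        rw [he]; rfl
      · intro x hx
        simpa using hx
    · have hhead : (φ rgtR).head? = some (encΓ (v.headD M.blank)) := by
        cases v with
        | nil =>
          cases hbsc : bs with
          | nil => rw [hbsc] at hR; simp at hR; exact absurd hR he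
          | cons x bs2 =>
            rw [hbsc] at hR
            rw [hR]
            have hx : x = encΓ M.blank := hbs x (by rw [hbsc]; exact List.mem_cons_self)
            simp [hx]
        | cons a v' => rw [hR]; simp
      set φ2 := upd φ1 TrR (1 :: φ1 TrR) with hφ2
      have ev2 : Eval (seqList ((LG M).map (br2 M encΓ))) (φ1, 0) (φ2, 0) :=
        phase2_fire hG hQinj hlt (show (φ1 rgtR).head? = _ from hhead)
      have ev3 : Eval (seqList [br3 M encΓ]) (φ2, 0) (φ2, 0) := by
        refine .seq ?_ (.skip _)
        simp only [br3]
        refine eval_if_neg ?_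
        show ((1 : ℕ) :: φ1 TrR).head? ≠ some 0
        simp
      exact ⟨φ2, bs, 1,
        eval_seqList_append (eval_seqList_append ev1 ev2) ev3,
        rfl, rfl, hR, hbs, hhead, rfl, by omega⟩
  obtain ⟨ψ, bs', t0, evA, eL, eQ, eR, hbs', hRh, hT, ht0⟩ := keyA
  have hQψ : (ψ qR).head? = some (encQ q₀) := by rw [eQ]; exact hQ
  have hLψ : ψ lftR = u.map encΓ := by rw [eL]; exact hL
  have hcg : ∀ u0 : ℕ, u0 = 0 →
      ∀ q a g, IsLeft M q a → u0 ≠ cG M encΓ encQ q a g := by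
    intro u0 h q a g _ hc
    have := cG_ge2 (encΓ := encΓ) (encQ := encQ) q a g
    omega
  have hcr : ∀ s0 : ℕ, s0 = 0 →
      ∀ q a, IsLeft M q a → s0 ≠ cRead M encΓ encQ q a := by
    intro s0 h q a _ hc
    have := cRead_ge2 (encΓ := encΓ) (encQ := encQ) q a
    omega
  by_cases hhalt : q₀ = M.qhalt
  · -- halting configuration
    have hk5 : ∀ q a, q ≠ M.qhalt → (M.δ q a).2.2 = true →
        t0 ≠ cRead M encΓ encQ q a := by
      intro q a _ _ h
      have := cRead_ge2 (encΓ := encΓ) (encQ := encQ) q a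
      omega
    have hk6 : ∀ q a, IsLeft M q a → t0 ≠ cRead M encΓ encQ q a := by
      intro q a _ h
      have := cRead_ge2 (encΓ := encΓ) (encQ := encQ) q a
      omega
    set X := upd (upd ψ UrR (0 :: ψ UrR)) SrR (0 :: ψ SrR) with hX
    have ev4 : Eval (seqList ((LQG M).map (br4 M encΓ encQ))) (ψ, 0) (ψ, 0) :=
      phase4_halt hG hQinj hlt hQψ hhalt
    have ev5 : Eval (seqList ((LQG M).map (br5 M encΓ encQ))) (ψ, 0) (ψ, 0) :=
      phase5_id hG hQinj hlt hT hk5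
    have ev6 : Eval (seqList ((LQG M).map (br6 M encΓ encQ))) (ψ, 0) (ψ, 0) :=
      phase6_id hG hQinj hlt hT hk6
    have evG : Eval (seqList [Term.push 0 UrR, Term.push 0 SrR]) (ψ, 0) (X, 0) :=
      .seq (eval_push0 _ _ _) (.seq (eval_push0 _ _ _) (.skip _))
    have ev8 : Eval (seqList ((LQGG M).map (br8 M encΓ encQ))) (X, 0) (X, 0) :=
      phase8_id_noleft hG hQinj hlt (show (X TrR).head? = some t0 from hT) hk6
    have ev9 : Eval (seqList ((LQG M).map (br9 M encΓ encQ))) (X, 0) (X, 0) :=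
      phase9_id_t hG hQinj hlt (show (X UrR).head? = some 0 from rfl)
        (show (X TrR).head? = some t0 from hT) hk6
    have ev10 : Eval (seqList ((LQGG M).map (br10 M encΓ encQ))) (X, 0) (X, 0) :=
      phase10_id hG hQinj hlt (show (X UrR).head? = some 0 from rfl) (hcg 0 rfl)
    have ev11 : Eval (seqList ((LQG M).map (br11 M encΓ encQ))) (X, 0) (X, 0) :=
      phase11_id hG hQinj hlt (show (X SrR).head? = some 0 from rfl) (hcr 0 rfl)
    refine ⟨X, ?_, Or.inl ⟨hhalt, rfl, show X lftR = _ from hLψ,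
      show (X qR).head? = _ from hQψ, bs', hbs', show X rgtR = _ from eR⟩⟩
    unfold SIMUL
    exact eval_seqList_append (eval_seqList_append (eval_seqList_append
      (eval_seqList_append (eval_seqList_append (eval_seqList_append
      (eval_seqList_append (eval_seqList_append evA ev4) ev5) ev6) evG) ev8) ev9)
      ev10) ev11
  · -- non-halting
    have hdec : ∃ r' bs2, ψ rgtR = encΓ (v.headD M.blank) :: r' ∧
        r' = v.tail.map encΓ ++ bs2 ∧ ∀ x ∈ bs2, x = encΓ M.blank := by
      cases v with
      | nil =>
        cases hbc : bs' with
        | nil => rw [hbc] at eR; rw [eR] at hRh; simp at hRh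
        | cons x bs2 =>
          rw [hbc] at eR
          have hx : x = encΓ M.blank := hbs' x (by rw [hbc]; exact List.mem_cons_self)
          refine ⟨bs2, bs2, ?_, rfl, ?_⟩
          · rw [eR, hx]; rfl
          · intro y hy; exact hbs' y (by rw [hbc]; exact List.mem_cons_of_mem _ hy)
      | cons a v' => exact ⟨v'.map encΓ ++ bs', bs', eR, rfl, hbs'⟩
    obtain ⟨r', bs2, hψR, hr'val, hbs2⟩ := hdec
    set ψ4 := upd ψ TrR (cRead M encΓ encQ q₀ (v.headD M.blank) :: ψ TrR) with hψ4
    have ev4 : Eval (seqList ((LQG M).map (br4 M encΓ encQ))) (ψ, 0) (ψ4, 0) :=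
      phase4_fire hG hQinj hlt (p₀ := (q₀, v.headD M.blank)) hQψ hhalt hRh
    by_cases hd : (M.δ q₀ (v.headD M.blank)).2.2 = true
    · -- right move
      have hknoleft : ∀ q a, IsLeft M q a →
          cRead M encΓ encQ q₀ (v.headD M.blank) ≠ cRead M encΓ encQ q a := by
        intro q a hIL heq
        obtain ⟨h1, h2⟩ := cRead_inj hQinj hG hlt heq
        rw [← h1, ← h2] at hIL
        rw [hIL.2] at hd
        exact absurd hd (by simp)
      set ψ5 := upd (upd (upd ψ4 rgtR r') lftR
          (encΓ (nA M q₀ (v.headD M.blank)) :: ψ4 lftR)) qR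
          (encQ (nQ M q₀ (v.headD M.blank)) :: ψ4 qR) with hψ5
      have ev5 : Eval (seqList ((LQG M).map (br5 M encΓ encQ))) (ψ4, 0) (ψ5, 0) :=
        phase5_fire hG hQinj hlt (p₀ := (q₀, v.headD M.blank))
          (show (ψ4 TrR).head? = some (cRead M encΓ encQ q₀ (v.headD M.blank)) from rfl)
          hhalt hd (show ψ4 rgtR = encΓ (v.headD M.blank) :: r' from hψR)
      have ev6 : Eval (seqList ((LQG M).map (br6 M encΓ encQ))) (ψ5, 0) (ψ5, 0) :=
        phase6_id hG hQinj hlt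
          (show (ψ5 TrR).head? = some (cRead M encΓ encQ q₀ (v.headD M.blank)) from rfl)
          hknoleft
      set ψ7 := upd (upd ψ5 UrR (0 :: ψ5 UrR)) SrR (0 :: ψ5 SrR) with hψ7
      have evG : Eval (seqList [Term.push 0 UrR, Term.push 0 SrR]) (ψ5, 0) (ψ7, 0) :=
        .seq (eval_push0 _ _ _) (.seq (eval_push0 _ _ _) (.skip _))
      have ev8 : Eval (seqList ((LQGG M).map (br8 M encΓ encQ))) (ψ7, 0) (ψ7, 0) :=
        phase8_id_noleft hG hQinj hlt
          (show (ψ7 TrR).head? = some (cRead M encΓ encQ q₀ (v.headD M.blank)) from rfl)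
          hknoleft
      have ev9 : Eval (seqList ((LQG M).map (br9 M encΓ encQ))) (ψ7, 0) (ψ7, 0) :=
        phase9_id_t hG hQinj hlt (show (ψ7 UrR).head? = some 0 from rfl)
          (show (ψ7 TrR).head? = some (cRead M encΓ encQ q₀ (v.headD M.blank)) from rfl)
          hknoleft
      have ev10 : Eval (seqList ((LQGG M).map (br10 M encΓ encQ))) (ψ7, 0) (ψ7, 0) :=
        phase10_id hG hQinj hlt (show (ψ7 UrR).head? = some 0 from rfl) (hcg 0 rfl)
      have ev11 : Eval (seqList ((LQG M).map (br11 M encΓ encQ))) (ψ7, 0) (ψ7, 0) :=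
        phase11_id hG hQinj hlt (show (ψ7 SrR).head? = some 0 from rfl) (hcr 0 rfl)
      have hstep : M.stepFn (u, q₀, v) =
          ((M.δ q₀ (v.headD M.blank)).2.1 :: u, (M.δ q₀ (v.headD M.blank)).1, v.tail) := by
        simp only [TM.stepFn, hd]
        simp
      refine ⟨ψ7, ?_, Or.inr ⟨hhalt, ?_⟩⟩
      · unfold SIMUL
        exact eval_seqList_append (eval_seqList_append (eval_seqList_append
          (eval_seqList_append (eval_seqList_append (eval_seqList_append
          (eval_seqList_append (eval_seqList_append evA ev4) ev5) ev6) evG) ev8) ev9)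
          ev10) ev11
      · rw [hstep]
        refine ⟨rfl, ?_, rfl, bs2, hbs2, ?_⟩
        · show encΓ (nA M q₀ (v.headD M.blank)) :: ψ lftR = _
          rw [hLψ]; rfl
        · exact hr'val
    · -- left move
      have hdf : (M.δ q₀ (v.headD M.blank)).2.2 = false := by simpa using hd
      have hIL : IsLeft M q₀ (v.headD M.blank) := ⟨hhalt, hdf⟩
      have hknoright : ∀ q a, q ≠ M.qhalt → (M.δ q a).2.2 = true →
          cRead M encΓ encQ q₀ (v.headD M.blank) ≠ cRead M encΓ encQ q a := by
        intro q a _ hdr heq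
        obtain ⟨h1, h2⟩ := cRead_inj hQinj hG hlt heq
        rw [← h1, ← h2] at hdr
        rw [hdr] at hdf
        exact absurd hdf (by simp)
      have ev5 : Eval (seqList ((LQG M).map (br5 M encΓ encQ))) (ψ4, 0) (ψ4, 0) :=
        phase5_id hG hQinj hlt
          (show (ψ4 TrR).head? = some (cRead M encΓ encQ q₀ (v.headD M.blank)) from rfl)
          hknoright
      set ψ6 := upd (upd ψ4 rgtR r') rgtR
          (encΓ (nA M q₀ (v.headD M.blank)) :: r') with hψ6
      have ev6 : Eval (seqList ((LQG M).map (br6 M encΓ encQ))) (ψ4, 0) (ψ6, 0) :=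
        phase6_fire hG hQinj hlt (p₀ := (q₀, v.headD M.blank))
          (show (ψ4 TrR).head? = some (cRead M encΓ encQ q₀ (v.headD M.blank)) from rfl)
          hIL (show ψ4 rgtR = encΓ (v.headD M.blank) :: r' from hψR)
      set ψ7 := upd (upd ψ6 UrR (0 :: ψ6 UrR)) SrR (0 :: ψ6 SrR) with hψ7
      have evG : Eval (seqList [Term.push 0 UrR, Term.push 0 SrR]) (ψ6, 0) (ψ7, 0) :=
        .seq (eval_push0 _ _ _) (.seq (eval_push0 _ _ _) (.skip _))
      have hstep : M.stepFn (u, q₀, v) =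
          (u.tail, (M.δ q₀ (v.headD M.blank)).1,
            M.trim (u.headD M.blank :: (M.δ q₀ (v.headD M.blank)).2.1 :: v.tail)) := by
        simp only [TM.stepFn, hdf]
        simp
      cases u with
      | nil =>
        obtain ⟨bs3, hbs3, heq3⟩ := map_trim_rep (M := M) (encΓ := encΓ) hbs2
          (M.blank :: nA M q₀ (v.headD M.blank) :: v.tail)
        have ev8 : Eval (seqList ((LQGG M).map (br8 M encΓ encQ))) (ψ7, 0) (ψ7, 0) := by
          refine phase8_id_lempty hG hQinj hlt ?_
          show ψ lftR = []
          rw [hLψ]; rfl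
        set ψ9 := upd ψ7 SrR
            (cRead M encΓ encQ q₀ (v.headD M.blank) :: ψ7 SrR) with hψ9
        have ev9 : Eval (seqList ((LQG M).map (br9 M encΓ encQ))) (ψ7, 0) (ψ9, 0) :=
          phase9_fire hG hQinj hlt (p₀ := (q₀, v.headD M.blank))
            (show (ψ7 UrR).head? = some 0 from rfl)
            (show (ψ7 TrR).head? = some (cRead M encΓ encQ q₀ (v.headD M.blank)) from rfl)
            hIL
        have ev10 : Eval (seqList ((LQGG M).map (br10 M encΓ encQ))) (ψ9, 0) (ψ9, 0) :=
          phase10_id hG hQinj hlt (show (ψ9 UrR).head? = some 0 from rfl) (hcg 0 rfl)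
        set ψ11 := upd (upd ψ9 rgtR (encΓ M.blank :: ψ9 rgtR)) qR
            (encQ (nQ M q₀ (v.headD M.blank)) :: ψ9 qR) with hψ11
        have ev11 : Eval (seqList ((LQG M).map (br11 M encΓ encQ))) (ψ9, 0) (ψ11, 0) :=
          phase11_fire hG hQinj hlt (p₀ := (q₀, v.headD M.blank))
            (show (ψ9 SrR).head? = some (cRead M encΓ encQ q₀ (v.headD M.blank)) from rfl)
            hIL
        refine ⟨ψ11, ?_, Or.inr ⟨hhalt, ?_⟩⟩
        · unfold SIMUL
          exact eval_seqList_append (eval_seqList_append (eval_seqList_append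
            (eval_seqList_append (eval_seqList_append (eval_seqList_append
            (eval_seqList_append (eval_seqList_append evA ev4) ev5) ev6) evG) ev8) ev9)
            ev10) ev11
        · rw [hstep]
          refine ⟨rfl, show ψ lftR = _ from by rw [hLψ]; rfl, rfl, bs3, hbs3, ?_⟩
          show encΓ M.blank :: encΓ (nA M q₀ (v.headD M.blank)) :: r' = _
          rw [hr'val]
          exact heq3
      | cons g₀ u' =>
        obtain ⟨bs3, hbs3, heq3⟩ := map_trim_rep (M := M) (encΓ := encΓ) hbs2
          (g₀ :: nA M q₀ (v.headD M.blank) :: v.tail)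
        set ψ8 := upd ψ7 UrR
            (cG M encΓ encQ q₀ (v.headD M.blank) g₀ :: ψ7 UrR) with hψ8
        have ev8 : Eval (seqList ((LQGG M).map (br8 M encΓ encQ))) (ψ7, 0) (ψ8, 0) :=
          phase8_fire hG hQinj hlt (p₀ := (q₀, v.headD M.blank))
            (show (ψ7 TrR).head? = some (cRead M encΓ encQ q₀ (v.headD M.blank)) from rfl)
            hIL (show (ψ7 lftR).head? = some (encΓ g₀) from by
              show (ψ lftR).head? = _
              rw [hLψ]; rfl)
        have ev9 : Eval (seqList ((LQG M).map (br9 M encΓ encQ))) (ψ8, 0) (ψ8, 0) := by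
          refine phase9_id_u hG hQinj hlt
            (show (ψ8 UrR).head? = some (cG M encΓ encQ q₀ (v.headD M.blank) g₀) from rfl) ?_
          have := cG_ge2 (encΓ := encΓ) (encQ := encQ) q₀ (v.headD M.blank) g₀
          omega
        set ψ10 := upd (upd (upd ψ8 lftR (u'.map encΓ)) rgtR
            (encΓ g₀ :: ψ8 rgtR)) qR
            (encQ (nQ M q₀ (v.headD M.blank)) :: ψ8 qR) with hψ10
        have ev10 : Eval (seqList ((LQGG M).map (br10 M encΓ encQ))) (ψ8, 0) (ψ10, 0) :=
          phase10_fire hG hQinj hlt (p₀ := (q₀, v.headD M.blank))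
            (show (ψ8 UrR).head? = some (cG M encΓ encQ q₀ (v.headD M.blank) g₀) from rfl)
            hIL (show ψ8 lftR = encΓ g₀ :: u'.map encΓ from by
              show ψ lftR = _
              rw [hLψ]; rfl)
        have ev11 : Eval (seqList ((LQG M).map (br11 M encΓ encQ))) (ψ10, 0) (ψ10, 0) :=
          phase11_id hG hQinj hlt (show (ψ10 SrR).head? = some 0 from rfl) (hcr 0 rfl)
        refine ⟨ψ10, ?_, Or.inr ⟨hhalt, ?_⟩⟩
        · unfold SIMUL
          exact eval_seqList_append (eval_seqList_append (eval_seqList_append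
            (eval_seqList_append (eval_seqList_append (eval_seqList_append
            (eval_seqList_append (eval_seqList_append evA ev4) ev5) ev6) evG) ev8) ev9)
            ev10) ev11
        · rw [hstep]
          refine ⟨rfl, rfl, rfl, bs3, hbs3, ?_⟩
          show encΓ g₀ :: encΓ (nA M q₀ (v.headD M.blank)) :: r' = _
          rw [hr'val]
          exact heq3

end Phases


lemma eval_iterSeq_succ {t : Term} {k : ℕ} {ω ω' ω'' : FState}
    (h1 : Eval t ω ω') (h2 : Eval (iterSeq t k) ω' ω'') :
    Eval (iterSeq t (k + 1)) ω ω'' := by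
  cases k with
  | zero => cases h2; exact h1
  | succ n => exact .seq h1 h2

end ForNoAux

open ForNo in
/-- Iterated simulation: if `σ ≈ c` and `c ⇝ᵖ c_HALT` with
`c_HALT` halting, then for every `k ≥ p` the `k`-fold sequential composition of
`SIMULATE` maps `σ` to a state simulating `c_HALT`. -/
theorem simulate_iterated {S : Type} [Fintype S] (M : TM S) (hM : M.PTime)
    (encΓ : M.Γ → ℕ) (encQ : M.Q → ℕ) (hsetup : SimSetup M encΓ encQ) :
    ∃ SIMULATE : Term, InForNo SIMULATE ∧
      ∀ (σ : FState) (c chalt : M.Config) (p : ℕ),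
        Sim M encΓ encQ σ c → M.Steps p c chalt → chalt.2.1 = M.qhalt →
        ∀ k : ℕ, p ≤ k →
          ∃ τ : FState, Eval (iterSeq SIMULATE k) σ τ ∧ Sim M encΓ encQ τ chalt := by
  obtain ⟨hG, hlt, -, hQinj⟩ := hsetup
  refine ⟨ForNoAux.SIMUL M encΓ encQ, ForNoAux.SIMUL_inForNo, ?_⟩
  intro σ c chalt p hsim hsteps hhalt k hk
  induction k generalizing σ c p with
  | zero =>
    have hp : p = 0 := Nat.le_zero.mp hk
    subst hp
    have hceq : c = chalt := hsteps
    subst hceq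
    exact ⟨σ, .skip σ, hsim⟩
  | succ k ih =>
    obtain ⟨φ, c2⟩ := σ
    have hc2 : c2 = 0 := hsim.1
    subst hc2
    cases p with
    | zero =>
      have hceq : c = chalt := hsteps
      subst hceq
      obtain ⟨ψ, hev, hor⟩ := ForNoAux.step_eval hG hQinj hlt hsim
      rcases hor with ⟨-, hsim'⟩ | ⟨hne, -⟩
      · obtain ⟨τ, hev2, hsim2⟩ := ih (ψ, 0) c 0 hsim' rfl (Nat.zero_le k)
        exact ⟨τ, ForNoAux.eval_iterSeq_succ hev hev2, hsim2⟩
      · exact absurd hhalt hne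
    | succ p' =>
      obtain ⟨c', hstep, hsteps'⟩ := hsteps
      obtain ⟨ψ, hev, hor⟩ := ForNoAux.step_eval hG hQinj hlt hsim
      rcases hor with ⟨heq, -⟩ | ⟨-, hsim'⟩
      · exact absurd heq hstep.1
      · have hsim'' : Sim M encΓ encQ (ψ, 0) c' := by rw [hstep.2]; exact hsim'
        obtain ⟨τ, hev2, hsim2⟩ := ih (ψ, 0) c' p' hsim'' hsteps' (by omega)
        exact ⟨τ, ForNoAux.eval_iterSeq_succ hev hev2, hsim2⟩
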